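/- Descent of elements of mGT_q (Proposition 6.3, existence and uniqueness): for positive natural numbers p, q with p ∣ q and every permutation σ ∈ mGT_q, there exists a unique permutation τ of ZMod p such that t_{q,p} ∘ σ = τ ∘ t_{q,p}, and moreover this τ belongs to mGT_p. -/

import Mathlib

/-- The multiplication-by-`d` permutation `a ↦ d * a` of `ZMod q`, for a unit `d`. -/
def multPerm (q : ℕ) (d : (ZMod q)ˣ) : Equiv.Perm (ZMod q) where
  toFun a := (d : ZMod q) * a
  invFun a := ((d⁻¹ : (ZMod q)ˣ) : ZMod q) * a
  left_inv a := by simp [← mul_assoc]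
  right_inv a := by simp [← mul_assoc]

/-- The involution `θ_q : a ↦ 1 - a` of `ZMod q` as a permutation. -/
def thetaPerm (q : ℕ) : Equiv.Perm (ZMod q) where
  toFun a := 1 - a
  invFun a := 1 - a
  left_inv a := by ring
  right_inv a := by ring

/-- The group `mGT_q`: the subgroup of the permutation group of `ZMod q` generated
by the multiplication permutations `a ↦ d * a` for all units `d`, together with `θ_q`. -/
def mGT (q : ℕ) : Subgroup (Equiv.Perm (ZMod q)) :=
  Subgroup.closure (Set.range (multPerm q) ∪ {thetaPerm q})

lemma castHom_surj (p q : ℕ) (hp : 0 < p) (hq : 0 < q) (h : p ∣ q) :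
    Function.Surjective (ZMod.castHom h (ZMod p)) := by
  haveI : NeZero q := ⟨hq.ne'⟩
  haveI : NeZero p := ⟨hp.ne'⟩
  intro b
  obtain ⟨k, rfl⟩ := ZMod.natCast_zmod_surjective (n := p) b
  exact ⟨(k : ZMod q), by simp⟩

lemma mGT_descend_exists (p q : ℕ) (hq : 0 < q) (h : p ∣ q)
    (σ : Equiv.Perm (ZMod q)) (hσ : σ ∈ mGT q) :
    ∃ τ ∈ mGT p, ⇑(ZMod.castHom h (ZMod p)) ∘ ⇑σ = ⇑τ ∘ ⇑(ZMod.castHom h (ZMod p)) := by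
  haveI : NeZero q := ⟨hq.ne'⟩
  induction hσ using Subgroup.closure_induction with
  | mem x hx =>
    rcases hx with ⟨d, rfl⟩ | hx
    · refine ⟨multPerm p (ZMod.unitsMap h d), ?_, ?_⟩
      · exact Subgroup.subset_closure (Or.inl ⟨_, rfl⟩)
      · funext a
        show ZMod.castHom h (ZMod p) ((d : ZMod q) * a)
            = ((ZMod.unitsMap h d : (ZMod p)ˣ) : ZMod p) * ZMod.castHom h (ZMod p) a
        rw [map_mul]; rfl
    · simp only [Set.mem_singleton_iff] at hx
      subst hx
      refine ⟨thetaPerm p, Subgroup.subset_closure (Or.inr rfl), ?_⟩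
      funext a
      show ZMod.castHom h (ZMod p) (1 - a) = 1 - ZMod.castHom h (ZMod p) a
      rw [map_sub, map_one]
  | one => exact ⟨1, one_mem _, rfl⟩
  | mul x y hx hy ihx ihy =>
    obtain ⟨τx, hτx, hcx⟩ := ihx
    obtain ⟨τy, hτy, hcy⟩ := ihy
    refine ⟨τx * τy, mul_mem hτx hτy, ?_⟩
    funext a
    have := congrFun hcx (y a)
    have := congrFun hcy a
    simp only [Function.comp_apply] at *
    simp_all [Equiv.Perm.mul_apply]
  | inv x hx ihx =>
    obtain ⟨τ, hτ, hc⟩ := ihx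
    refine ⟨τ⁻¹, inv_mem hτ, ?_⟩
    funext a
    have := congrFun hc (x⁻¹ a)
    simp only [Function.comp_apply, Equiv.Perm.inv_def, Equiv.apply_symm_apply] at this
    simp only [Function.comp_apply, this, Equiv.Perm.inv_def, Equiv.symm_apply_apply]

/-- Descent of elements of `mGT_q` (Proposition 6.3): for `p ∣ q` and every
`σ ∈ mGT_q`, there exists a unique permutation `τ` of `ZMod p` with
`t_{q,p} ∘ σ = τ ∘ t_{q,p}`, and moreover every such `τ` belongs to `mGT_p`. -/
theorem mGT_descent (p q : ℕ) (hp : 0 < p) (hq : 0 < q) (h : p ∣ q)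
    (σ : Equiv.Perm (ZMod q)) (hσ : σ ∈ mGT q) :
    (∃! τ : Equiv.Perm (ZMod p),
        ⇑(ZMod.castHom h (ZMod p)) ∘ ⇑σ = ⇑τ ∘ ⇑(ZMod.castHom h (ZMod p))) ∧
    ∀ τ : Equiv.Perm (ZMod p),
        ⇑(ZMod.castHom h (ZMod p)) ∘ ⇑σ = ⇑τ ∘ ⇑(ZMod.castHom h (ZMod p)) →
        τ ∈ mGT p := by
  obtain ⟨τ₀, hτ₀mem, hτ₀⟩ := mGT_descend_exists p q hq h σ hσ
  have hsurj := castHom_surj p q hp hq h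
  have huniq : ∀ τ : Equiv.Perm (ZMod p),
      ⇑(ZMod.castHom h (ZMod p)) ∘ ⇑σ = ⇑τ ∘ ⇑(ZMod.castHom h (ZMod p)) → τ = τ₀ := by
    intro τ hτ
    ext b
    obtain ⟨a, rfl⟩ := hsurj b
    have h1 := congrFun hτ a
    have h2 := congrFun hτ₀ a
    simp only [Function.comp_apply] at h1 h2
    rw [← h1, h2]
  refine ⟨⟨τ₀, hτ₀, huniq⟩, fun τ hτ => ?_⟩
  rw [huniq τ hτ]; exact hτ₀mem
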